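/- Let C_m ≤ C(m+1) for all m and let f_m be as above. Then for every α ∈ (0,1) and every k ∈ {1,2,3}, the Hermite polynomial H_k(f_m, C_m) tends to 0 in the Besov space 𝒞^{-α} = B^{-α}_{∞,∞}(𝕋²) as m → ∞; more precisely ‖f_m‖_{𝒞^{-α}} ≲ C_m^{1/2} 2^{-αm}, ‖f_m² − C_m‖_{𝒞^{-α}} ≲ C_m 2^{-αm}, and ‖f_m³ − 3C_m f_m‖_{𝒞^{-α}} ≲ C_m^{3/2} 2^{-αm}. -/

import Mathlib

open Real Complex MeasureTheory Filter

/-- Fourier coefficient of a function on the 2-torus (identified with `[0,1]²`). -/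
noncomputable def torusFourierCoeff (f : ℝ × ℝ → ℂ) (l : ℤ × ℤ) : ℂ :=
  ∫ z in Set.Icc (0:ℝ) 1 ×ˢ Set.Icc (0:ℝ) 1,
    f z * Complex.exp (-(2 * π * Complex.I * ((l.1 : ℂ) * z.1 + (l.2 : ℂ) * z.2)))

/-- Dyadic annuli in frequency space: index `0` plays the role of `κ = -1`
(frequencies of modulus `< 1`), index `κ+1` the annulus `2^κ ≤ |l| < 2^{κ+1}`. -/
def dyadicAnnulus : ℕ → Set (ℤ × ℤ)
  | 0 => {l | Real.sqrt ((l.1 : ℝ) ^ 2 + (l.2 : ℝ) ^ 2) < 1}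
  | (κ + 1) => {l | (2 : ℝ) ^ κ ≤ Real.sqrt ((l.1 : ℝ) ^ 2 + (l.2 : ℝ) ^ 2) ∧
      Real.sqrt ((l.1 : ℝ) ^ 2 + (l.2 : ℝ) ^ 2) < 2 ^ (κ + 1)}

/-- Littlewood–Paley block `δ_κ f`. -/
noncomputable def lpBlock (κ : ℕ) (f : ℝ × ℝ → ℂ) (z : ℝ × ℝ) : ℂ :=
  ∑' l : ℤ × ℤ, (dyadicAnnulus κ).indicator
    (fun l => torusFourierCoeff f l *
      Complex.exp (2 * π * Complex.I * ((l.1 : ℂ) * z.1 + (l.2 : ℂ) * z.2))) l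

/-- The Besov `𝒞^{-α} = B^{-α}_{∞,∞}` norm (index shift: `κ : ℕ` stands for `κ - 1 ≥ -1`). -/
noncomputable def besovNegNorm (α : ℝ) (f : ℝ × ℝ → ℂ) : ℝ :=
  ⨆ κ : ℕ, (2 : ℝ) ^ (-α * ((κ : ℝ) - 1)) * ⨆ z : ℝ × ℝ, ‖lpBlock κ f z‖

/- ### Auxiliary material -/

noncomputable def Efun (l : ℤ × ℤ) (z : ℝ × ℝ) : ℂ :=
  Complex.exp (2 * π * Complex.I * ((l.1:ℂ) * z.1 + (l.2:ℂ) * z.2))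

lemma integral_exp_int (n : ℤ) :
    ∫ x in Set.Icc (0:ℝ) 1, Complex.exp (2 * π * Complex.I * (n:ℂ) * x)
      = if n = 0 then 1 else 0 := by
  rw [MeasureTheory.integral_Icc_eq_integral_Ioc, ← intervalIntegral.integral_of_le zero_le_one]
  by_cases hn : n = 0
  · simp [hn]
  · have hc : (2 * π * Complex.I * (n:ℂ)) ≠ 0 := by
      simp [Real.pi_ne_zero, Complex.I_ne_zero, hn, Complex.ofReal_ne_zero]
    rw [if_neg hn, integral_exp_mul_complex hc]
    simp only [Complex.ofReal_one, Complex.ofReal_zero, mul_one, mul_zero, Complex.exp_zero]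
    have h1 : Complex.exp (2 * ↑π * Complex.I * (n:ℂ)) = 1 := by
      rw [← Complex.exp_int_mul_two_pi_mul_I n]; congr 1; ring
    rw [h1, sub_self, zero_div]

lemma coeff_E (l l' : ℤ × ℤ) :
    torusFourierCoeff (Efun l) l' = if l' = l then 1 else 0 := by
  have key : ∀ z : ℝ × ℝ, Efun l z *
      Complex.exp (-(2 * π * Complex.I * ((l'.1 : ℂ) * z.1 + (l'.2 : ℂ) * z.2)))
      = (fun x : ℝ => Complex.exp (2 * π * Complex.I * ((l.1 - l'.1 : ℤ) : ℂ) * x)) z.1 *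
        (fun y : ℝ => Complex.exp (2 * π * Complex.I * ((l.2 - l'.2 : ℤ) : ℂ) * y)) z.2 := by
    intro z
    simp only
    rw [Efun, ← Complex.exp_add, ← Complex.exp_add]
    congr 1; push_cast; ring
  rw [torusFourierCoeff]
  simp_rw [key]
  rw [Measure.volume_eq_prod,
    setIntegral_prod_mul (fun x : ℝ => Complex.exp (2 * π * Complex.I * ((l.1 - l'.1 : ℤ) : ℂ) * x))
      (fun y : ℝ => Complex.exp (2 * π * Complex.I * ((l.2 - l'.2 : ℤ) : ℂ) * y)),
    integral_exp_int, integral_exp_int]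
  by_cases h : l' = l
  · simp [h]
  · have : l.1 - l'.1 ≠ 0 ∨ l.2 - l'.2 ≠ 0 := by
      by_contra hc
      push_neg at hc
      exact h (Prod.ext (by omega) (by omega)).symm
    rcases this with h1 | h2
    · simp [h1, h]
    · simp [h2, h]

lemma norm_Efun (l : ℤ × ℤ) (z : ℝ × ℝ) : ‖Efun l z‖ = 1 := by
  rw [Efun]
  have : (2 * (π:ℂ) * Complex.I * ((l.1:ℂ) * z.1 + (l.2:ℂ) * z.2))
      = ((2 * π * (l.1 * z.1 + l.2 * z.2) : ℝ) : ℂ) * Complex.I := by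
    push_cast; ring
  rw [this, Complex.norm_exp_ofReal_mul_I]

lemma coeff_sum (s : Finset (ℤ × ℤ)) (w : ℤ × ℤ → ℂ) (l' : ℤ × ℤ) :
    torusFourierCoeff (fun z => ∑ l ∈ s, w l * Efun l z) l' =
      if l' ∈ s then w l' else 0 := by
  rw [torusFourierCoeff]
  have : ∀ z : ℝ × ℝ, (∑ l ∈ s, w l * Efun l z) *
      Complex.exp (-(2 * π * Complex.I * ((l'.1 : ℂ) * z.1 + (l'.2 : ℂ) * z.2)))
      = ∑ l ∈ s, w l * (Efun l z *
        Complex.exp (-(2 * π * Complex.I * ((l'.1 : ℂ) * z.1 + (l'.2 : ℂ) * z.2)))) := by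
    intro z; rw [Finset.sum_mul]; exact Finset.sum_congr rfl fun l _ => by ring
  simp_rw [this]
  rw [MeasureTheory.integral_finset_sum]
  · have : ∀ l ∈ s, (∫ z in Set.Icc (0:ℝ) 1 ×ˢ Set.Icc (0:ℝ) 1, w l * (Efun l z *
        Complex.exp (-(2 * π * Complex.I * ((l'.1 : ℂ) * z.1 + (l'.2 : ℂ) * z.2)))))
        = w l * (if l' = l then 1 else 0) := by
      intro l _
      rw [MeasureTheory.integral_const_mul, ← coeff_E l l', torusFourierCoeff]
    rw [Finset.sum_congr rfl this]
    simp_rw [mul_ite, mul_one, mul_zero]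
    rw [Finset.sum_ite_eq s l' w]
  · intro l _
    have hcont : Continuous fun z : ℝ × ℝ => w l * (Efun l z *
        Complex.exp (-(2 * π * Complex.I * ((l'.1 : ℂ) * z.1 + (l'.2 : ℂ) * z.2)))) := by
      unfold Efun; fun_prop
    exact hcont.continuousOn.integrableOn_compact (isCompact_Icc.prod isCompact_Icc)

open Classical in
lemma lpBlock_sum (κ : ℕ) (s : Finset (ℤ × ℤ)) (w : ℤ × ℤ → ℂ) (z : ℝ × ℝ) :
    lpBlock κ (fun z => ∑ l ∈ s, w l * Efun l z) z
      = ∑ l ∈ s, if l ∈ dyadicAnnulus κ then w l * Efun l z else 0 := by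
  rw [lpBlock]
  rw [tsum_eq_sum (s := s) ?h]
  · refine Finset.sum_congr rfl fun l hl => ?_
    rw [Set.indicator_apply]
    split_ifs with h
    · rw [coeff_sum, if_pos hl]; rfl
    · rfl
  · intro l hl
    rw [Set.indicator_apply]
    split_ifs with h
    · rw [coeff_sum, if_neg hl, zero_mul]
    · rfl

open Classical in
lemma besov_le (α : ℝ) (s : Finset (ℤ × ℤ)) (w : ℤ × ℤ → ℂ) (B : ℝ) (hB : 0 ≤ B)
    (h : ∀ κ : ℕ, (2 : ℝ) ^ (-α * ((κ : ℝ) - 1)) *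
      (∑ l ∈ s, if l ∈ dyadicAnnulus κ then ‖w l‖ else 0) ≤ B) :
    besovNegNorm α (fun z => ∑ l ∈ s, w l * Efun l z) ≤ B := by
  rw [besovNegNorm]
  refine Real.iSup_le (fun κ => ?_) hB
  have hpow : (0:ℝ) < (2 : ℝ) ^ (-α * ((κ : ℝ) - 1)) := Real.rpow_pos_of_pos two_pos _
  have hsup : (⨆ z : ℝ × ℝ, ‖lpBlock κ (fun z => ∑ l ∈ s, w l * Efun l z) z‖)
      ≤ ∑ l ∈ s, if l ∈ dyadicAnnulus κ then ‖w l‖ else 0 := by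
    refine Real.iSup_le (fun z => ?_) ?_
    · rw [lpBlock_sum]
      refine (norm_sum_le _ _).trans ?_
      refine Finset.sum_le_sum fun l hl => ?_
      split_ifs with hA
      · rw [norm_mul, norm_Efun, mul_one]
      · simp
    · exact Finset.sum_nonneg fun l _ => by positivity
  calc (2 : ℝ) ^ (-α * ((κ : ℝ) - 1)) * ⨆ z : ℝ × ℝ,
        ‖lpBlock κ (fun z => ∑ l ∈ s, w l * Efun l z) z‖
      ≤ (2 : ℝ) ^ (-α * ((κ : ℝ) - 1)) *
        (∑ l ∈ s, if l ∈ dyadicAnnulus κ then ‖w l‖ else 0) :=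
        mul_le_mul_of_nonneg_left hsup hpow.le
    _ ≤ B := h κ

lemma besov_nonneg (α : ℝ) (f : ℝ × ℝ → ℂ) : 0 ≤ besovNegNorm α f := by
  refine Real.iSup_nonneg fun κ => ?_
  have : (0:ℝ) ≤ ⨆ z : ℝ × ℝ, ‖lpBlock κ f z‖ := Real.iSup_nonneg fun z => norm_nonneg _
  positivity

lemma mem_annulus_iff (n : ℤ) (a : ℕ)
    (h1 : (2:ℝ) ^ a ≤ Real.sqrt (((n:ℤ):ℝ) ^ 2 + ((n:ℤ):ℝ) ^ 2))
    (h2 : Real.sqrt (((n:ℤ):ℝ) ^ 2 + ((n:ℤ):ℝ) ^ 2) < 2 ^ (a + 1)) (κ : ℕ) :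
    ((n, n) ∈ dyadicAnnulus κ ↔ κ = a + 1) := by
  match κ with
  | 0 =>
    simp only [dyadicAnnulus, Set.mem_setOf_eq]
    constructor
    · intro hlt
      exact absurd (lt_of_le_of_lt ((one_le_pow₀ one_le_two (n := a)).trans h1) hlt)
        (lt_irrefl 1)
    · omega
  | (j + 1) =>
    simp only [dyadicAnnulus, Set.mem_setOf_eq]
    constructor
    · rintro ⟨hj1, hj2⟩
      by_contra hne
      rcases lt_or_gt_of_ne (fun hja : j = a => hne (by omega)) with hlt | hgt
      · have : (2:ℝ) ^ (j + 1) ≤ 2 ^ a := pow_le_pow_right₀ one_le_two (by omega)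
        linarith
      · have : (2:ℝ) ^ (a + 1) ≤ 2 ^ j := pow_le_pow_right₀ one_le_two (by omega)
        linarith
    · intro hk
      have hja : j = a := by omega
      subst hja
      exact ⟨h1, h2⟩

lemma sqrt_diag (n : ℤ) :
    Real.sqrt (((n:ℤ):ℝ) ^ 2 + ((n:ℤ):ℝ) ^ 2) = |(n:ℝ)| * Real.sqrt 2 := by
  rw [show ((n:ℤ):ℝ) ^ 2 + ((n:ℤ):ℝ) ^ 2 = ((n:ℝ)) ^ 2 * 2 by push_cast; ring,
    Real.sqrt_mul (sq_nonneg _), Real.sqrt_sq_eq_abs]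

lemma sqrt2_bounds : (1:ℝ) ≤ Real.sqrt 2 ∧ Real.sqrt 2 < 2 := by
  constructor
  · rw [show (1:ℝ) = Real.sqrt 1 by simp]
    exact Real.sqrt_le_sqrt (by norm_num)
  · nlinarith [Real.sq_sqrt (by norm_num : (0:ℝ) ≤ 2), Real.sqrt_nonneg 2]

lemma diag_mem_pow (j : ℕ) (n : ℤ) (hn : |(n:ℝ)| = 2 ^ j) (κ : ℕ) :
    ((n, n) ∈ dyadicAnnulus κ ↔ κ = j + 1) := by
  apply mem_annulus_iff
  · rw [sqrt_diag, hn]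
    nlinarith [sqrt2_bounds.1, pow_pos (two_pos (α := ℝ)) j]
  · rw [sqrt_diag, hn, pow_succ]
    have := pow_pos (two_pos (α := ℝ)) j
    nlinarith [sqrt2_bounds.2]

lemma diag_mem_3pow (j : ℕ) (n : ℤ) (hn : |(n:ℝ)| = 3 * 2 ^ j) (κ : ℕ) :
    ((n, n) ∈ dyadicAnnulus κ ↔ κ = j + 3) := by
  have h := mem_annulus_iff n (j + 2) ?_ ?_ κ
  · rw [h]
  · rw [sqrt_diag, hn]
    have hp := pow_pos (two_pos (α := ℝ)) j
    have h4 : (4:ℝ) ≤ 3 * Real.sqrt 2 := by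
      nlinarith [Real.sq_sqrt (by norm_num : (0:ℝ) ≤ 2), Real.sqrt_nonneg 2]
    calc (2:ℝ) ^ (j + 2) = 4 * 2 ^ j := by ring
      _ ≤ (3 * Real.sqrt 2) * 2 ^ j := by nlinarith
      _ = 3 * 2 ^ j * Real.sqrt 2 := by ring
  · rw [sqrt_diag, hn]
    have hp := pow_pos (two_pos (α := ℝ)) j
    have h8 : 3 * Real.sqrt 2 < 8 := by
      nlinarith [Real.sq_sqrt (by norm_num : (0:ℝ) ≤ 2), Real.sqrt_nonneg 2]
    calc 3 * 2 ^ j * Real.sqrt 2 = (3 * Real.sqrt 2) * 2 ^ j := by ring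
      _ < 8 * 2 ^ j := by nlinarith
      _ = 2 ^ (j + 2 + 1) := by ring

open Classical in
lemma pair_besov (α : ℝ) (n : ℤ) (t : ℕ) (b : ℂ) (hn : 0 < n)
    (hmem : ∀ κ, (((n, n) : ℤ × ℤ) ∈ dyadicAnnulus κ ↔ κ = t + 1))
    (hmemn : ∀ κ, (((-n, -n) : ℤ × ℤ) ∈ dyadicAnnulus κ ↔ κ = t + 1))
    (g : ℝ × ℝ → ℂ)
    (hg : ∀ z, g z = b * Efun (n, n) z + b * Efun (-n, -n) z) :
    besovNegNorm α g ≤ (2:ℝ) ^ (-α * (t:ℝ)) * (2 * ‖b‖) := by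
  have hne : ((n, n) : ℤ × ℤ) ≠ (-n, -n) := by
    simp only [ne_eq, Prod.mk.injEq, not_and]
    intro h; omega
  have hgs : g = fun z => ∑ l ∈ ({((n,n) : ℤ×ℤ), (-n,-n)} : Finset (ℤ × ℤ)), b * Efun l z := by
    funext z; rw [hg, Finset.sum_pair hne]
  rw [hgs]
  apply besov_le _ _ _ _ (by positivity)
  intro κ
  rw [Finset.sum_pair hne]
  by_cases hκ : κ = t + 1
  · subst hκ
    rw [if_pos ((hmem _).2 rfl), if_pos ((hmemn _).2 rfl)]
    have he : -α * (((t + 1 : ℕ) : ℝ) - 1) = -α * t := by push_cast; ring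
    rw [he]
    exact le_of_eq (by ring)
  · rw [if_neg (fun h => hκ ((hmem _).1 h)), if_neg (fun h => hκ ((hmemn _).1 h))]
    have h2 : (0:ℝ) < (2:ℝ) ^ (-α * ((κ:ℝ) - 1)) := Real.rpow_pos_of_pos two_pos _
    have hb : (0:ℝ) ≤ (2:ℝ) ^ (-α * (t:ℝ)) * (2 * ‖b‖) := by positivity
    simpa using hb

open Classical in
lemma quad_besov (α : ℝ) (n : ℤ) (t : ℕ) (b1 b2 : ℂ) (hn : 0 < n)
    (hmem3 : ∀ κ, (((3 * n, 3 * n) : ℤ × ℤ) ∈ dyadicAnnulus κ ↔ κ = t + 3))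
    (hmem3n : ∀ κ, (((-(3 * n), -(3 * n)) : ℤ × ℤ) ∈ dyadicAnnulus κ ↔ κ = t + 3))
    (hmem : ∀ κ, (((n, n) : ℤ × ℤ) ∈ dyadicAnnulus κ ↔ κ = t + 1))
    (hmemn : ∀ κ, (((-n, -n) : ℤ × ℤ) ∈ dyadicAnnulus κ ↔ κ = t + 1))
    (g : ℝ × ℝ → ℂ)
    (hg : ∀ z, g z = b1 * Efun (3 * n, 3 * n) z + b1 * Efun (-(3 * n), -(3 * n)) z
      + b2 * Efun (n, n) z + b2 * Efun (-n, -n) z)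
    (B : ℝ) (hB : 0 ≤ B)
    (hB1 : (2:ℝ) ^ (-α * ((t:ℝ) + 2)) * (2 * ‖b1‖) ≤ B)
    (hB2 : (2:ℝ) ^ (-α * (t:ℝ)) * (2 * ‖b2‖) ≤ B) :
    besovNegNorm α g ≤ B := by
  set r : ℤ × ℤ := (3 * n, 3 * n) with hr
  set rn : ℤ × ℤ := (-(3 * n), -(3 * n)) with hrn
  set p : ℤ × ℤ := (n, n) with hp
  set pn : ℤ × ℤ := (-n, -n) with hpn
  have hd : r ≠ rn ∧ r ≠ p ∧ r ≠ pn ∧ rn ≠ p ∧ rn ≠ pn ∧ p ≠ pn := by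
    refine ⟨?_, ?_, ?_, ?_, ?_, ?_⟩ <;>
      · simp only [hr, hrn, hp, hpn, ne_eq, Prod.mk.injEq, not_and]
        intro h; omega
  set w : ℤ × ℤ → ℂ := fun l => if l = r ∨ l = rn then b1 else b2 with hw
  have hwr : w r = b1 := if_pos (Or.inl rfl)
  have hwrn : w rn = b1 := if_pos (Or.inr rfl)
  have hwp : w p = b2 := if_neg (by push_neg; exact ⟨hd.2.1.symm, hd.2.2.2.1.symm⟩)
  have hwpn : w pn = b2 := if_neg (by push_neg; exact ⟨hd.2.2.1.symm, hd.2.2.2.2.1.symm⟩)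
  have hm1 : rn ∉ ({p, pn} : Finset (ℤ × ℤ)) := by
    simp [hd.2.2.2.1, hd.2.2.2.2.1]
  have hm2 : r ∉ ({rn, p, pn} : Finset (ℤ × ℤ)) := by
    simp [hd.1, hd.2.1, hd.2.2.1]
  have hm3 : p ∉ ({pn} : Finset (ℤ × ℤ)) := by simp [hd.2.2.2.2.2]
  have hsum : ∀ (F : ℤ × ℤ → ℂ), ∑ l ∈ ({r, rn, p, pn} : Finset (ℤ × ℤ)), F l
      = F r + F rn + F p + F pn := by
    intro F
    rw [Finset.sum_insert hm2, Finset.sum_insert hm1, Finset.sum_pair hd.2.2.2.2.2]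
    ring
  have hsumR : ∀ (F : ℤ × ℤ → ℝ), ∑ l ∈ ({r, rn, p, pn} : Finset (ℤ × ℤ)), F l
      = F r + F rn + F p + F pn := by
    intro F
    rw [Finset.sum_insert hm2, Finset.sum_insert hm1, Finset.sum_pair hd.2.2.2.2.2]
    ring
  have hgs : g = fun z => ∑ l ∈ ({r, rn, p, pn} : Finset (ℤ × ℤ)), w l * Efun l z := by
    funext z
    rw [hg, hsum, hwr, hwrn, hwp, hwpn]
  rw [hgs]
  apply besov_le _ _ _ _ hB
  intro κ
  rw [hsumR]
  by_cases hκ3 : κ = t + 3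
  · subst hκ3
    rw [if_pos ((hmem3 _).2 rfl), if_pos ((hmem3n _).2 rfl),
      if_neg (fun h => by have := (hmem _).1 h; omega),
      if_neg (fun h => by have := (hmemn _).1 h; omega), hwr, hwrn]
    have he : -α * (((t + 3 : ℕ) : ℝ) - 1) = -α * ((t:ℝ) + 2) := by push_cast; ring
    rw [he]
    calc (2:ℝ) ^ (-α * ((t:ℝ) + 2)) * (‖b1‖ + ‖b1‖ + 0 + 0)
        = (2:ℝ) ^ (-α * ((t:ℝ) + 2)) * (2 * ‖b1‖) := by ring
      _ ≤ B := hB1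
  · by_cases hκ1 : κ = t + 1
    · subst hκ1
      rw [if_pos ((hmem _).2 rfl), if_pos ((hmemn _).2 rfl),
        if_neg (fun h => by have := (hmem3 _).1 h; omega),
        if_neg (fun h => by have := (hmem3n _).1 h; omega), hwp, hwpn]
      have he : -α * (((t + 1 : ℕ) : ℝ) - 1) = -α * (t:ℝ) := by push_cast; ring
      rw [he]
      calc (2:ℝ) ^ (-α * (t:ℝ)) * (0 + 0 + ‖b2‖ + ‖b2‖)
          = (2:ℝ) ^ (-α * (t:ℝ)) * (2 * ‖b2‖) := by ring
        _ ≤ B := hB2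
    · rw [if_neg (fun h => hκ3 ((hmem3 _).1 h)), if_neg (fun h => hκ3 ((hmem3n _).1 h)),
        if_neg (fun h => hκ1 ((hmem _).1 h)), if_neg (fun h => hκ1 ((hmemn _).1 h))]
      have h2 : (0:ℝ) < (2:ℝ) ^ (-α * ((κ:ℝ) - 1)) := Real.rpow_pos_of_pos two_pos _
      simpa using hB

lemma x_mul_sqrt (x : ℝ) (hx : 0 ≤ x) : x * Real.sqrt x = x ^ ((3:ℝ)/2) := by
  rcases hx.eq_or_lt with h | h
  · rw [← h]
    rw [Real.zero_rpow (by norm_num)]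
    simp
  · rw [Real.sqrt_eq_rpow]
    nth_rewrite 1 [← Real.rpow_one x]
    rw [← Real.rpow_add h]
    norm_num

set_option maxHeartbeats 1000000 in
/-- If `C_m ≤ C(m+1)` then the first three Hermite polynomials of
`f_m = (C_m/2)^{1/2}(e_{2^m z₀} + e_{-2^m z₀})`, `z₀ = (1,1)`, tend to `0` in `𝒞^{-α}`,
with the quantitative bounds `‖f_m‖ ≲ C_m^{1/2} 2^{-αm}`, `‖f_m² − C_m‖ ≲ C_m 2^{-αm}`,
`‖f_m³ − 3C_m f_m‖ ≲ C_m^{3/2} 2^{-αm}`. -/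
theorem stmt_7 (α : ℝ) (hα : α ∈ Set.Ioo (0:ℝ) 1) (C : ℝ) (hC : 0 < C)
    (Cm : ℕ → ℝ) (hCm0 : ∀ m, 0 ≤ Cm m) (hCmC : ∀ m, Cm m ≤ C * (m + 1))
    (f : ℕ → ℝ × ℝ → ℂ)
    (hf : ∀ m z, f m z = (Real.sqrt (Cm m) / Real.sqrt 2 : ℝ) *
      (Complex.exp (2 * π * Complex.I * ((2:ℂ) ^ m * z.1 + (2:ℂ) ^ m * z.2)) +
       Complex.exp (-(2 * π * Complex.I * ((2:ℂ) ^ m * z.1 + (2:ℂ) ^ m * z.2))))) :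
    (∃ C' > 0, ∀ m : ℕ,
       besovNegNorm α (f m) ≤ C' * Real.sqrt (Cm m) * 2 ^ (-α * m) ∧
       besovNegNorm α (fun z => f m z ^ 2 - (Cm m : ℂ)) ≤ C' * Cm m * 2 ^ (-α * m) ∧
       besovNegNorm α (fun z => f m z ^ 3 - 3 * (Cm m : ℂ) * f m z)
         ≤ C' * Cm m ^ ((3:ℝ)/2) * 2 ^ (-α * m)) ∧
    Tendsto (fun m => besovNegNorm α (f m)) atTop (nhds 0) ∧
    Tendsto (fun m => besovNegNorm α (fun z => f m z ^ 2 - (Cm m : ℂ))) atTop (nhds 0) ∧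
    Tendsto (fun m => besovNegNorm α (fun z => f m z ^ 3 - 3 * (Cm m : ℂ) * f m z))
      atTop (nhds 0) := by

  obtain ⟨hα0, hα1⟩ := hα
  have key : ∀ m : ℕ,
      besovNegNorm α (f m) ≤ 3 * Real.sqrt (Cm m) * 2 ^ (-α * m) ∧
      besovNegNorm α (fun z => f m z ^ 2 - (Cm m : ℂ)) ≤ 3 * Cm m * 2 ^ (-α * m) ∧
      besovNegNorm α (fun z => f m z ^ 3 - 3 * (Cm m : ℂ) * f m z)
        ≤ 3 * Cm m ^ ((3:ℝ)/2) * 2 ^ (-α * m) := by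
    intro m
    set c : ℝ := Real.sqrt (Cm m) / Real.sqrt 2 with hcdef
    have hc0 : 0 ≤ c := div_nonneg (Real.sqrt_nonneg _) (Real.sqrt_nonneg _)
    have hc2 : c ^ 2 = Cm m / 2 := by
      rw [hcdef, div_pow, Real.sq_sqrt (hCm0 m), Real.sq_sqrt (by norm_num : (0:ℝ) ≤ 2)]
    have hcle : c ≤ Real.sqrt (Cm m) := by
      rw [hcdef]
      exact div_le_self (Real.sqrt_nonneg _) sqrt2_bounds.1
    have hc2C : ((c:ℝ):ℂ) ^ 2 = ((Cm m : ℝ):ℂ) / 2 := by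
      rw [← Complex.ofReal_pow, hc2]; push_cast; ring
    clear_value c
    have habs : |(((2:ℤ)^m : ℤ):ℝ)| = 2 ^ m := by
      push_cast; rw [abs_of_pos (by positivity)]
    have habsn : |((-((2:ℤ)^m) : ℤ):ℝ)| = 2 ^ m := by
      push_cast; rw [abs_neg, abs_of_pos (by positivity)]
    have habs2 : |(((2:ℤ)^(m+1) : ℤ):ℝ)| = 2 ^ (m+1) := by
      push_cast; rw [abs_of_pos (by positivity)]
    have habs2n : |((-((2:ℤ)^(m+1)) : ℤ):ℝ)| = 2 ^ (m+1) := by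
      push_cast; rw [abs_neg, abs_of_pos (by positivity)]
    have habs3 : |((3*(2:ℤ)^m : ℤ):ℝ)| = 3 * 2 ^ m := by
      push_cast; rw [abs_of_pos (by positivity)]
    have habs3n : |((-(3*(2:ℤ)^m) : ℤ):ℝ)| = 3 * 2 ^ m := by
      push_cast; rw [abs_neg, abs_of_pos (by positivity)]
    have hpow2 : ∀ a b : ℝ, a ≤ b → (2:ℝ) ^ (-α * b) ≤ (2:ℝ) ^ (-α * a) := by
      intro a b hab
      exact Real.rpow_le_rpow_of_exponent_le one_le_two (by nlinarith)
    have hsq3 : Real.sqrt (Cm m) ^ 3 = Cm m ^ ((3:ℝ)/2) := by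
      have h1 : Real.sqrt (Cm m) ^ 3 = Cm m * Real.sqrt (Cm m) := by
        rw [pow_succ, Real.sq_sqrt (hCm0 m)]
      rw [h1, x_mul_sqrt _ (hCm0 m)]
    have hCm32 : Cm m * Real.sqrt (Cm m) = Cm m ^ ((3:ℝ)/2) := x_mul_sqrt _ (hCm0 m)
    -- ### Part 1
    have part1 : besovNegNorm α (f m) ≤ 3 * Real.sqrt (Cm m) * 2 ^ (-α * m) := by
      have h := pair_besov α ((2:ℤ)^m) m ((c:ℝ):ℂ) (by positivity)
        (fun κ => diag_mem_pow m _ habs κ) (fun κ => diag_mem_pow m _ habsn κ)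
        (f m) ?_
      · refine h.trans ?_
        have hnormc : ‖((c:ℝ):ℂ)‖ = c := by
          rw [Complex.norm_real, Real.norm_eq_abs, _root_.abs_of_nonneg hc0]
        rw [hnormc]
        have h1 : 2 * c ≤ 3 * Real.sqrt (Cm m) := by
          nlinarith [Real.sqrt_nonneg (Cm m)]
        have h2 : (0:ℝ) < (2:ℝ) ^ (-α * (m:ℝ)) := Real.rpow_pos_of_pos two_pos _
        nlinarith
      · intro z
        have e1 : Efun ((2:ℤ)^m, (2:ℤ)^m) z
            = Complex.exp (2 * π * Complex.I * ((2:ℂ)^m * z.1 + (2:ℂ)^m * z.2)) := by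
          rw [Efun]; congr 1; push_cast; ring
        have e2 : Efun (-((2:ℤ)^m), -((2:ℤ)^m)) z
            = Complex.exp (-(2 * π * Complex.I * ((2:ℂ)^m * z.1 + (2:ℂ)^m * z.2))) := by
          rw [Efun]; congr 1; push_cast; ring
        rw [hf m z, ← hcdef, e1, e2]
        ring
    -- ### Part 2
    have part2 : besovNegNorm α (fun z => f m z ^ 2 - (Cm m : ℂ))
        ≤ 3 * Cm m * 2 ^ (-α * m) := by
      have h := pair_besov α ((2:ℤ)^(m+1)) (m+1) ((Cm m / 2 : ℝ):ℂ) (by positivity)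
        (fun κ => diag_mem_pow (m+1) _ habs2 κ) (fun κ => diag_mem_pow (m+1) _ habs2n κ)
        (fun z => f m z ^ 2 - (Cm m : ℂ)) ?_
      · refine h.trans ?_
        have hnb : ‖((Cm m / 2 : ℝ):ℂ)‖ = Cm m / 2 := by
          rw [Complex.norm_real, Real.norm_eq_abs,
            _root_.abs_of_nonneg (by linarith [hCm0 m])]
        rw [hnb]
        have h2 : (2:ℝ) ^ (-α * ((m+1:ℕ):ℝ)) ≤ (2:ℝ) ^ (-α * (m:ℝ)) := by
          apply hpow2; push_cast; linarith
        have h3 : (0:ℝ) < (2:ℝ) ^ (-α * (m:ℝ)) := Real.rpow_pos_of_pos two_pos _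
        have h4 : (0:ℝ) < (2:ℝ) ^ (-α * ((m+1:ℕ):ℝ)) := Real.rpow_pos_of_pos two_pos _
        nlinarith [hCm0 m]
      · intro z
        beta_reduce
        rw [hf m z, ← hcdef]
        set X : ℂ := 2 * π * Complex.I * ((2:ℂ)^m * z.1 + (2:ℂ)^m * z.2) with hX
        set u : ℂ := Complex.exp X with hudef
        have hu0 : u ≠ 0 := Complex.exp_ne_zero X
        have e1 : Efun ((2:ℤ)^(m+1), (2:ℤ)^(m+1)) z = u * u := by
          rw [hudef, ← Complex.exp_add, Efun]; congr 1; rw [hX]; push_cast; ring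
        have e2 : Efun (-((2:ℤ)^(m+1)), -((2:ℤ)^(m+1))) z = (u * u)⁻¹ := by
          rw [hudef, ← Complex.exp_add, ← Complex.exp_neg, Efun]
          congr 1; rw [hX]; push_cast; ring
        have eneg : Complex.exp (-X) = u⁻¹ := by rw [hudef, ← Complex.exp_neg]
        clear_value u
        clear_value X
        rw [e1, e2, eneg, mul_pow, hc2C]
        have hcast : ((Cm m / 2 : ℝ):ℂ) = ((Cm m : ℝ):ℂ) / 2 := by push_cast; ring
        rw [hcast]
        field_simp
        ring
    -- ### Part 3
    have part3 : besovNegNorm α (fun z => f m z ^ 3 - 3 * (Cm m : ℂ) * f m z)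
        ≤ 3 * Cm m ^ ((3:ℝ)/2) * 2 ^ (-α * m) := by
      have hrpow_nonneg : (0:ℝ) ≤ Cm m ^ ((3:ℝ)/2) := Real.rpow_nonneg (hCm0 m) _
      have h3' : (0:ℝ) < (2:ℝ) ^ (-α * (m:ℝ)) := Real.rpow_pos_of_pos two_pos _
      have hB : (0:ℝ) ≤ 3 * Cm m ^ ((3:ℝ)/2) * 2 ^ (-α * (m:ℝ)) :=
        mul_nonneg (mul_nonneg (by norm_num) hrpow_nonneg) h3'.le
      have hnb1 : ‖((c^3 : ℝ):ℂ)‖ = c^3 := by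
        rw [Complex.norm_real, Real.norm_eq_abs, _root_.abs_of_nonneg (pow_nonneg hc0 3)]
      have hb2nn : (0:ℝ) ≤ 3/2 * Cm m * c :=
        mul_nonneg (mul_nonneg (by norm_num) (hCm0 m)) hc0
      have hnb2 : ‖((-(3/2 * Cm m * c) : ℝ):ℂ)‖ = 3/2 * Cm m * c := by
        rw [Complex.norm_real, Real.norm_eq_abs, abs_neg, _root_.abs_of_nonneg hb2nn]
      apply quad_besov α ((2:ℤ)^m) m ((c^3 : ℝ):ℂ) ((-(3/2 * Cm m * c) : ℝ):ℂ)
        (by positivity)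
        (fun κ => diag_mem_3pow m _ habs3 κ) (fun κ => diag_mem_3pow m _ habs3n κ)
        (fun κ => diag_mem_pow m _ habs κ) (fun κ => diag_mem_pow m _ habsn κ)
        _ ?_ _ hB ?_ ?_
      · intro z
        beta_reduce
        rw [hf m z, ← hcdef]
        set X : ℂ := 2 * π * Complex.I * ((2:ℂ)^m * z.1 + (2:ℂ)^m * z.2) with hX
        set u : ℂ := Complex.exp X with hudef
        have hu0 : u ≠ 0 := Complex.exp_ne_zero X
        have e3 : Efun (3*(2:ℤ)^m, 3*(2:ℤ)^m) z = u * u * u := by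
          rw [hudef, ← Complex.exp_add, ← Complex.exp_add, Efun]
          congr 1; rw [hX]; push_cast; ring
        have e3n : Efun (-(3*(2:ℤ)^m), -(3*(2:ℤ)^m)) z = (u * u * u)⁻¹ := by
          rw [hudef, ← Complex.exp_add, ← Complex.exp_add, ← Complex.exp_neg, Efun]
          congr 1; rw [hX]; push_cast; ring
        have e1 : Efun ((2:ℤ)^m, (2:ℤ)^m) z = u := by
          rw [hudef, Efun]; congr 1; rw [hX]; push_cast; ring
        have e1n : Efun (-((2:ℤ)^m), -((2:ℤ)^m)) z = u⁻¹ := by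
          rw [hudef, ← Complex.exp_neg, Efun]; congr 1; rw [hX]; push_cast; ring
        have eneg : Complex.exp (-X) = u⁻¹ := by rw [hudef, ← Complex.exp_neg]
        clear_value u
        clear_value X
        rw [e3, e3n, e1, e1n, eneg, mul_pow, Complex.ofReal_pow]
        have hc3C : ((c:ℝ):ℂ) ^ 3 = ((Cm m : ℝ):ℂ) / 2 * ((c:ℝ):ℂ) := by
          rw [pow_succ, hc2C]
        rw [hc3C]
        have hb2cast : ((-(3/2 * Cm m * c) : ℝ):ℂ) = -(3/2 * ((Cm m : ℝ):ℂ) * ((c:ℝ):ℂ)) := by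
          push_cast; ring
        rw [hb2cast]
        have h3' : u ^ 3 * u⁻¹ ^ 3 = 1 := by
          rw [← mul_pow, mul_inv_cancel₀ hu0, one_pow]
        field_simp
        linear_combination (0:ℂ) * h3'
      · -- high-frequency bound
        rw [hnb1]
        have hcc : 2 * c^3 ≤ 3 * Cm m ^ ((3:ℝ)/2) := by
          have h1 : c^3 ≤ Real.sqrt (Cm m) ^ 3 := pow_le_pow_left₀ hc0 hcle 3
          rw [hsq3] at h1
          linarith
        have hexp : (2:ℝ) ^ (-α * ((m:ℝ) + 2)) ≤ (2:ℝ) ^ (-α * (m:ℝ)) := by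
          apply hpow2; linarith
        calc (2:ℝ) ^ (-α * ((m:ℝ) + 2)) * (2 * c^3)
            ≤ (2:ℝ) ^ (-α * (m:ℝ)) * (3 * Cm m ^ ((3:ℝ)/2)) := by
              apply mul_le_mul hexp hcc
                (by nlinarith [pow_nonneg hc0 3])
                h3'.le
          _ = 3 * Cm m ^ ((3:ℝ)/2) * 2 ^ (-α * (m:ℝ)) := by ring
      · -- low-frequency bound
        rw [hnb2]
        have hcc : 2 * (3/2 * Cm m * c) ≤ 3 * Cm m ^ ((3:ℝ)/2) := by
          have h1 : Cm m * c ≤ Cm m * Real.sqrt (Cm m) :=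
            mul_le_mul_of_nonneg_left hcle (hCm0 m)
          rw [hCm32] at h1
          linarith
        calc (2:ℝ) ^ (-α * (m:ℝ)) * (2 * (3/2 * Cm m * c))
            ≤ (2:ℝ) ^ (-α * (m:ℝ)) * (3 * Cm m ^ ((3:ℝ)/2)) :=
              mul_le_mul_of_nonneg_left hcc h3'.le
          _ = 3 * Cm m ^ ((3:ℝ)/2) * 2 ^ (-α * (m:ℝ)) := by ring
    exact ⟨part1, part2, part3⟩
  -- ### Assemble
  set q : ℝ := (2:ℝ) ^ (-α) with hqdef
  have hq0 : 0 < q := Real.rpow_pos_of_pos two_pos _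
  have hq1 : q < 1 := Real.rpow_lt_one_of_one_lt_of_neg one_lt_two (by linarith)
  have hqm : ∀ m : ℕ, (2:ℝ) ^ (-α * (m:ℝ)) = q ^ m := by
    intro m
    rw [hqdef, Real.rpow_mul (by norm_num : (0:ℝ) ≤ 2), Real.rpow_natCast]
  have hP1 : ∀ m : ℕ, 1 ≤ (C+1) * ((m:ℝ)+1) := by
    intro m
    have hm : (0:ℝ) ≤ m := Nat.cast_nonneg m
    nlinarith
  have hPb : ∀ m : ℕ, Cm m ≤ (C+1) * ((m:ℝ)+1) := by
    intro m
    have hm : (0:ℝ) ≤ m := Nat.cast_nonneg m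
    have := hCmC m
    nlinarith
  have hPa : ∀ m : ℕ, Real.sqrt (Cm m) ≤ (C+1) * ((m:ℝ)+1) := by
    intro m
    nlinarith [Real.sq_sqrt (hCm0 m), Real.sqrt_nonneg (Cm m), hPb m, hP1 m]
  have hsq32 : ∀ m : ℕ, Cm m ^ ((3:ℝ)/2) ≤ ((C+1) * ((m:ℝ)+1))^2 := by
    intro m
    rw [← x_mul_sqrt _ (hCm0 m)]
    have := hPa m; have := hPb m
    nlinarith [hCm0 m, Real.sqrt_nonneg (Cm m), hP1 m]
  have hDt : Tendsto (fun m : ℕ => 3 * ((C+1) * ((m:ℝ)+1))^2 * q ^ m) atTop (nhds 0) := by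
    have h0 := tendsto_pow_const_mul_const_pow_of_lt_one 2 hq0.le hq1
    have h1 : Tendsto (fun m : ℕ => ((m:ℝ)+1)^2 * q ^ (m+1)) atTop (nhds 0) := by
      have := h0.comp (tendsto_add_atTop_nat 1)
      refine this.congr fun m => ?_
      simp only [Function.comp_apply]
      push_cast
      ring
    have h2 := h1.const_mul (3*(C+1)^2 * q⁻¹)
    rw [mul_zero] at h2
    refine h2.congr fun m => ?_
    have hq0' : q ≠ 0 := ne_of_gt hq0
    push_cast
    field_simp
    ring
  have sq1 : Tendsto (fun m => besovNegNorm α (f m)) atTop (nhds 0) := by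
    apply squeeze_zero (fun m => besov_nonneg α (f m)) (fun m => ?_) hDt
    calc besovNegNorm α (f m) ≤ 3 * Real.sqrt (Cm m) * 2 ^ (-α * (m:ℝ)) := (key m).1
      _ = 3 * Real.sqrt (Cm m) * q ^ m := by rw [hqm m]
      _ ≤ 3 * ((C+1) * ((m:ℝ)+1))^2 * q ^ m := by
          have h4 : Real.sqrt (Cm m) ≤ ((C+1) * ((m:ℝ)+1))^2 := by
            nlinarith [hPa m, hP1 m, Real.sqrt_nonneg (Cm m)]
          have h3 : (0:ℝ) ≤ q ^ m := pow_nonneg hq0.le m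
          nlinarith [mul_le_mul_of_nonneg_right h4 h3]
  have sq2 : Tendsto (fun m => besovNegNorm α (fun z => f m z ^ 2 - (Cm m : ℂ)))
      atTop (nhds 0) := by
    apply squeeze_zero (fun m => besov_nonneg α _) (fun m => ?_) hDt
    calc besovNegNorm α (fun z => f m z ^ 2 - (Cm m : ℂ))
        ≤ 3 * Cm m * 2 ^ (-α * (m:ℝ)) := (key m).2.1
      _ = 3 * Cm m * q ^ m := by rw [hqm m]
      _ ≤ 3 * ((C+1) * ((m:ℝ)+1))^2 * q ^ m := by
          have h4 : Cm m ≤ ((C+1) * ((m:ℝ)+1))^2 := by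
            nlinarith [hPb m, hP1 m, hCm0 m]
          have h3 : (0:ℝ) ≤ q ^ m := pow_nonneg hq0.le m
          nlinarith [mul_le_mul_of_nonneg_right h4 h3]
  have sq3 : Tendsto (fun m => besovNegNorm α (fun z => f m z ^ 3 - 3 * (Cm m : ℂ) * f m z))
      atTop (nhds 0) := by
    apply squeeze_zero (fun m => besov_nonneg α _) (fun m => ?_) hDt
    calc besovNegNorm α (fun z => f m z ^ 3 - 3 * (Cm m : ℂ) * f m z)
        ≤ 3 * Cm m ^ ((3:ℝ)/2) * 2 ^ (-α * (m:ℝ)) := (key m).2.2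
      _ = 3 * Cm m ^ ((3:ℝ)/2) * q ^ m := by rw [hqm m]
      _ ≤ 3 * ((C+1) * ((m:ℝ)+1))^2 * q ^ m := by
          have h3 : (0:ℝ) ≤ q ^ m := pow_nonneg hq0.le m
          nlinarith [mul_le_mul_of_nonneg_right (hsq32 m) h3]
  exact ⟨⟨3, by norm_num, key⟩, sq1, sq2, sq3⟩
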